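/- Let X be a nonnegative random variable of the form X = max_{j ∈ P} w_j where P is a random subset of {1,...,M} including each j independently with probability r_j (max over empty set is 0), and w_j ≥ 0. Then E[X] ≥ (1 - 1/e) ∑_{j=1}^M w_j r_j, provided ∑_{j=1}^M r_j ≤ 1. -/

import Mathlib

open MeasureTheory


open Finset


lemma exp_chord {t : ℝ} (h0 : 0 ≤ t) (h1 : t ≤ 1) :
    1 - Real.exp (-t) ≥ (1 - 1 / Real.exp 1) * t := by
  have h := convexOn_exp.2 (Set.mem_univ (0:ℝ)) (Set.mem_univ (-1:ℝ))
    (by linarith : (0:ℝ) ≤ 1 - t) h0 (by ring)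
  simp only [smul_eq_mul, mul_zero, mul_neg, mul_one, Real.exp_zero] at h
  have h2 : Real.exp (-t) ≤ (1 - t) + t * Real.exp (-1) := by
    rwa [zero_add] at h
  rw [Real.exp_neg 1] at h2
  rw [ge_iff_le, div_eq_mul_inv, one_mul]
  nlinarith

lemma prod_one_sub_le {n : ℕ} (s : ℕ → ℝ) (hs1 : ∀ i < n, s i ≤ 1) :
    ∏ k ∈ range n, (1 - s k) ≤ Real.exp (-(∑ k ∈ range n, s k)) := by
  have : Real.exp (-(∑ k ∈ range n, s k)) = ∏ k ∈ range n, Real.exp (-(s k)) := by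
    rw [← Real.exp_sum]; congr 1; rw [Finset.sum_neg_distrib]
  rw [this]
  apply Finset.prod_le_prod
  · intro i hi; have := hs1 i (mem_range.mp hi); linarith
  · intro i hi
    have := Real.add_one_le_exp (-(s i))
    linarith

-- partial sums identity
lemma partial_sum_id (s : ℕ → ℝ) (m : ℕ) :
    ∑ i ∈ range m, s i * ∏ k ∈ range i, (1 - s k) = 1 - ∏ k ∈ range m, (1 - s k) := by
  induction m with
  | zero => simp
  | succ m ih =>
      rw [Finset.sum_range_succ, ih, Finset.prod_range_succ]
      ring

lemma key_ineq {n : ℕ} (s : ℕ → ℝ) (hs0 : ∀ i < n, 0 ≤ s i) (hs1 : ∀ i < n, s i ≤ 1)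
    (hsum : ∑ i ∈ range n, s i ≤ 1) {m : ℕ} (hm : m ≤ n) :
    (1 - 1 / Real.exp 1) * ∑ i ∈ range m, s i
      ≤ ∑ i ∈ range m, s i * ∏ k ∈ range i, (1 - s k) := by
  rw [partial_sum_id]
  have hS0 : 0 ≤ ∑ i ∈ range m, s i :=
    Finset.sum_nonneg fun i hi => hs0 i (lt_of_lt_of_le (mem_range.mp hi) hm)
  have hS1 : ∑ i ∈ range m, s i ≤ 1 := by
    refine le_trans (Finset.sum_le_sum_of_subset_of_nonneg
      (Finset.range_subset_range.mpr hm) ?_) hsum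
    intro i hi _; exact hs0 i (mem_range.mp hi)
  have h1 := prod_one_sub_le (n := m) s (fun i hi => hs1 i (lt_of_lt_of_le hi hm))
  have h2 := exp_chord hS0 hS1
  linarith

lemma comb {n : ℕ} (v s : ℕ → ℝ) (hv : ∀ i < n, 0 ≤ v i)
    (hvm : ∀ i, i + 1 < n → v (i + 1) ≤ v i)
    (hs0 : ∀ i < n, 0 ≤ s i) (hs1 : ∀ i < n, s i ≤ 1)
    (hsum : ∑ i ∈ range n, s i ≤ 1) :
    (1 - 1 / Real.exp 1) * ∑ i ∈ range n, v i * s i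
      ≤ ∑ i ∈ range n, v i * (s i * ∏ k ∈ range i, (1 - s k)) := by
  rcases Nat.eq_zero_or_pos n with hn | hn
  · simp [hn]
  set c : ℝ := 1 - 1 / Real.exp 1 with hc
  have he : (1:ℝ) ≤ Real.exp 1 := by have := Real.add_one_le_exp 1; linarith
  have hc0 : 0 ≤ c := by
    rw [hc]; have : 1 / Real.exp 1 ≤ 1 := by
      rw [div_le_one (by linarith)]; exact he
    linarith
  set a : ℕ → ℝ := fun i => s i * ∏ k ∈ range i, (1 - s k) with ha
  have hby1 := Finset.sum_range_by_parts v s n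
  have hby2 := Finset.sum_range_by_parts v a n
  simp only [smul_eq_mul] at hby1 hby2
  rw [hby1, hby2]
  have key : ∀ m ≤ n, c * ∑ i ∈ range m, s i ≤ ∑ i ∈ range m, a i := fun m hm =>
    key_ineq s hs0 hs1 hsum hm
  have hstep : c * (v (n-1) * ∑ i ∈ range n, s i
        - ∑ i ∈ range (n-1), (v (i+1) - v i) * ∑ j ∈ range (i+1), s j)
      = v (n-1) * (c * ∑ i ∈ range n, s i)
        - ∑ i ∈ range (n-1), (v (i+1) - v i) * (c * ∑ j ∈ range (i+1), s j) := by
    rw [mul_sub]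
    congr 1
    · rw [mul_left_comm]
    · rw [Finset.mul_sum]
      exact Finset.sum_congr rfl fun i _ => by ring
  rw [hstep]
  have h1 : v (n-1) * (c * ∑ i ∈ range n, s i) ≤ v (n-1) * ∑ i ∈ range n, a i :=
    mul_le_mul_of_nonneg_left (key n le_rfl) (hv _ (Nat.sub_lt hn one_pos))
  have h2 : ∑ i ∈ range (n-1), (v (i+1) - v i) * ∑ j ∈ range (i+1), a j
      ≤ ∑ i ∈ range (n-1), (v (i+1) - v i) * (c * ∑ j ∈ range (i+1), s j) := by
    apply Finset.sum_le_sum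
    intro i hi
    have hi' : i + 1 < n := by
      have := mem_range.mp hi; omega
    exact mul_le_mul_of_nonpos_left (key (i+1) (le_of_lt hi'))
      (by have := hvm i hi'; linarith)
  linarith


section
variable {M : ℕ}

lemma fiber_eq (s : Fin M → ℝ) (i : Fin M) :
    ∑ Z ∈ (Finset.Ioi i).powerset,
      ((∏ k ∈ insert i Z, s k) * ∏ k ∈ (insert i Z)ᶜ, (1 - s k))
      = s i * ∏ k ∈ Finset.Iio i, (1 - s k) := by
  have hone : ∑ Z ∈ (Finset.Ioi i).powerset,
      (∏ k ∈ Z, s k) * ∏ k ∈ Finset.Ioi i \ Z, (1 - s k) = 1 := by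
    rw [← Finset.prod_add]
    simp
  calc ∑ Z ∈ (Finset.Ioi i).powerset,
      ((∏ k ∈ insert i Z, s k) * ∏ k ∈ (insert i Z)ᶜ, (1 - s k))
      = ∑ Z ∈ (Finset.Ioi i).powerset,
        (s i * ∏ k ∈ Finset.Iio i, (1 - s k)) *
          ((∏ k ∈ Z, s k) * ∏ k ∈ Finset.Ioi i \ Z, (1 - s k)) := by
        apply Finset.sum_congr rfl
        intro Z hZ
        have hZ' : Z ⊆ Finset.Ioi i := Finset.mem_powerset.mp hZ
        have hiZ : i ∉ Z := fun h => lt_irrefl i (Finset.mem_Ioi.mp (hZ' h))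
        have hcompl : (insert i Z)ᶜ = Finset.Iio i ∪ (Finset.Ioi i \ Z) := by
          ext k
          simp only [Finset.mem_compl, Finset.mem_insert, Finset.mem_union,
            Finset.mem_sdiff, Finset.mem_Iio, Finset.mem_Ioi, not_or]
          constructor
          · rintro ⟨hki, hkZ⟩
            rcases lt_or_gt_of_ne hki with h | h
            · exact Or.inl h
            · exact Or.inr ⟨h, hkZ⟩
          · rintro (h | ⟨h, hkZ⟩)
            · exact ⟨ne_of_lt h, fun hk => absurd (Finset.mem_Ioi.mp (hZ' hk)) (lt_asymm h)⟩
            · exact ⟨ne_of_gt h, hkZ⟩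
        have hdisj : Disjoint (Finset.Iio i) (Finset.Ioi i \ Z) := by
          apply Finset.disjoint_left.mpr
          intro k hk hk2
          exact absurd (Finset.mem_Ioi.mp (Finset.mem_sdiff.mp hk2).1)
            (lt_asymm (Finset.mem_Iio.mp hk))
        rw [Finset.prod_insert hiZ, hcompl, Finset.prod_union hdisj]
        ring
      _ = (s i * ∏ k ∈ Finset.Iio i, (1 - s k)) * 1 := by
        rw [← Finset.mul_sum, hone]
      _ = s i * ∏ k ∈ Finset.Iio i, (1 - s k) := by ring
end

section
variable {M : ℕ}

lemma min_fiber [NeZero M] (m : Finset (Fin M) → Fin M)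
    (hm : ∀ (Y : Finset (Fin M)) (h : Y.Nonempty), m Y = Y.min' h) (i : Fin M) :
    (Finset.univ.filter (fun Y : Finset (Fin M) => Y.Nonempty ∧ m Y = i))
      = (Finset.Ioi i).powerset.image (insert i) := by
  ext Y
  simp only [Finset.mem_filter, Finset.mem_univ, true_and, Finset.mem_image,
    Finset.mem_powerset]
  constructor
  · rintro ⟨hY, hmin⟩
    rw [hm Y hY] at hmin
    refine ⟨Y.erase i, ?_, ?_⟩
    · intro k hk
      rw [Finset.mem_Ioi]
      have hk' := Finset.mem_erase.mp hk
      have := Y.min'_le k hk'.2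
      rw [hmin] at this
      exact lt_of_le_of_ne this (Ne.symm hk'.1)
    · rw [Finset.insert_erase]
      rw [← hmin]; exact Y.min'_mem hY
  · rintro ⟨Z, hZ, rfl⟩
    have hY : (insert i Z).Nonempty := Finset.insert_nonempty _ _
    refine ⟨hY, ?_⟩
    rw [hm _ hY]
    apply le_antisymm
    · exact Finset.min'_le _ _ (Finset.mem_insert_self i Z)
    · apply Finset.le_min'
      intro k hk
      rcases Finset.mem_insert.mp hk with rfl | hk
      · exact le_rfl
      · exact le_of_lt (Finset.mem_Ioi.mp (hZ hk))
end

lemma part2 {M : ℕ} (w r : Fin M → ℝ)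
    (hw : ∀ j, 0 ≤ w j) (hr : ∀ j, 0 ≤ r j ∧ r j ≤ 1) (hrsum : ∑ j, r j ≤ 1)
    (g : Finset (Fin M) → ℝ) (hg0 : ∀ X, 0 ≤ g X) (hgmem : ∀ X j, j ∈ X → w j ≤ g X) :
    (1 - 1 / Real.exp 1) * ∑ j, w j * r j
      ≤ ∑ X : Finset (Fin M), ((∏ j ∈ X, r j) * ∏ j ∈ Xᶜ, (1 - r j)) * g X := by
  classical
  rcases Nat.eq_zero_or_pos M with hM | hM
  · subst hM
    have h1 : ∑ j : Fin 0, w j * r j = 0 := by simp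
    rw [h1, mul_zero]
    apply Finset.sum_nonneg
    intro X _
    apply mul_nonneg _ (hg0 X)
    apply mul_nonneg <;> apply Finset.prod_nonneg <;> intro j hj
    · exact (hr j).1
    · linarith [(hr j).2]
  haveI : NeZero M := ⟨by omega⟩
  -- sorted permutation
  set σ : Equiv.Perm (Fin M) := Tuple.sort (fun i => -w i) with hσ
  have hmono : Monotone ((fun i => -w i) ∘ σ) := Tuple.monotone_sort _
  set v : Fin M → ℝ := fun i => w (σ i) with hv
  set s : Fin M → ℝ := fun i => r (σ i) with hs
  have hvanti : ∀ i j : Fin M, i ≤ j → v j ≤ v i := by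
    intro i j hij
    have := hmono hij
    simp only [Function.comp_apply, neg_le_neg_iff] at this
    exact this
  have hs0 : ∀ i, 0 ≤ s i := fun i => (hr (σ i)).1
  have hs1 : ∀ i, s i ≤ 1 := fun i => (hr (σ i)).2
  have hv0 : ∀ i, 0 ≤ v i := fun i => hw (σ i)
  -- reindex the big sum
  have hreindex : ∑ X : Finset (Fin M), ((∏ j ∈ X, r j) * ∏ j ∈ Xᶜ, (1 - r j)) * g X
      = ∑ Y : Finset (Fin M),
          ((∏ i ∈ Y, s i) * ∏ i ∈ Yᶜ, (1 - s i)) * g (Y.map σ.toEmbedding) := by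
    rw [← Equiv.sum_comp σ.finsetCongr
      (fun X => ((∏ j ∈ X, r j) * ∏ j ∈ Xᶜ, (1 - r j)) * g X)]
    apply Finset.sum_congr rfl
    intro Y _
    have hmapc : (Y.map σ.toEmbedding)ᶜ = Yᶜ.map σ.toEmbedding := by
      ext j
      simp [Finset.mem_map_equiv]
    rw [Equiv.finsetCongr_apply, Finset.prod_map, hmapc, Finset.prod_map]
    rfl
  rw [hreindex]
  set pp : Finset (Fin M) → ℝ := fun Y => (∏ i ∈ Y, s i) * ∏ i ∈ Yᶜ, (1 - s i) with hpp
  have hpp0 : ∀ Y, 0 ≤ pp Y := by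
    intro Y
    apply mul_nonneg <;> apply Finset.prod_nonneg <;> intro j hj
    · exact hs0 j
    · linarith [hs1 j]
  set m : Finset (Fin M) → Fin M :=
    fun Y => if h : Y.Nonempty then Y.min' h else Classical.arbitrary _ with hmdef
  have hm : ∀ (Y : Finset (Fin M)) (h : Y.Nonempty), m Y = Y.min' h := by
    intro Y h; simp [hmdef, dif_pos h]
  set L : Finset (Fin M) → ℝ :=
    fun Y => if Y.Nonempty then pp Y * v (m Y) else 0 with hLdef
  -- lower bound each term
  have hLB : ∑ Y : Finset (Fin M), L Y
      ≤ ∑ Y : Finset (Fin M), pp Y * g (Y.map σ.toEmbedding) := by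
    apply Finset.sum_le_sum
    intro Y _
    by_cases hY : Y.Nonempty
    · simp only [hLdef, if_pos hY]
      apply mul_le_mul_of_nonneg_left _ (hpp0 Y)
      apply hgmem
      rw [hm Y hY]
      exact Finset.mem_map_of_mem _ (Y.min'_mem hY)
    · simp only [hLdef, if_neg hY]
      exact mul_nonneg (hpp0 Y) (hg0 _)
  -- group by minimum
  have hgroup : ∑ Y : Finset (Fin M), L Y
      = ∑ i : Fin M, v i * (s i * ∏ k ∈ Finset.Iio i, (1 - s k)) := by
    rw [← Finset.sum_fiberwise_of_maps_to (g := m) (t := Finset.univ)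
      (fun Y _ => Finset.mem_univ (m Y)) L]
    apply Finset.sum_congr rfl
    intro i _
    have hsub : (Finset.univ.filter (fun Y : Finset (Fin M) => Y.Nonempty ∧ m Y = i))
        ⊆ Finset.univ.filter (fun Y => m Y = i) := by
      intro Y hY
      simp only [Finset.mem_filter] at hY ⊢
      exact ⟨hY.1, hY.2.2⟩
    have hzero : ∀ Y ∈ Finset.univ.filter (fun Y : Finset (Fin M) => m Y = i),
        Y ∉ Finset.univ.filter (fun Y : Finset (Fin M) => Y.Nonempty ∧ m Y = i) → L Y = 0 := by
      intro Y hY hY2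
      simp only [Finset.mem_filter, Finset.mem_univ, true_and] at hY hY2
      simp only [hLdef, if_neg (fun h => hY2 ⟨h, hY⟩)]
    rw [← Finset.sum_subset hsub hzero, min_fiber m hm i, Finset.sum_image ?inj]
    case inj =>
      intro Z1 h1 Z2 h2 heq
      have e1 : i ∉ Z1 := fun h =>
        lt_irrefl i (Finset.mem_Ioi.mp (Finset.mem_powerset.mp h1 h))
      have e2 : i ∉ Z2 := fun h =>
        lt_irrefl i (Finset.mem_Ioi.mp (Finset.mem_powerset.mp h2 h))
      rw [← Finset.erase_insert e1, ← Finset.erase_insert e2, heq]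
    have hterm : ∀ Z ∈ (Finset.Ioi i).powerset, L (insert i Z) = pp (insert i Z) * v i := by
      intro Z hZ
      have hY : (insert i Z).Nonempty := Finset.insert_nonempty _ _
      simp only [hLdef, if_pos hY]
      congr 2
      rw [hm _ hY]
      apply le_antisymm
      · exact Finset.min'_le _ _ (Finset.mem_insert_self i Z)
      · apply Finset.le_min'
        intro k hk
        rcases Finset.mem_insert.mp hk with rfl | hk
        · exact le_rfl
        · exact le_of_lt (Finset.mem_Ioi.mp (Finset.mem_powerset.mp hZ hk))
    rw [Finset.sum_congr rfl hterm]
    have := fiber_eq s i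
    calc ∑ Z ∈ (Finset.Ioi i).powerset, pp (insert i Z) * v i
        = (∑ Z ∈ (Finset.Ioi i).powerset, pp (insert i Z)) * v i := by
          rw [Finset.sum_mul]
      _ = (s i * ∏ k ∈ Finset.Iio i, (1 - s k)) * v i := by rw [hpp]; rw [this]
      _ = v i * (s i * ∏ k ∈ Finset.Iio i, (1 - s k)) := by ring
  -- transfer to ℕ and apply comb
  set vb : ℕ → ℝ := fun n => if h : n < M then v ⟨n, h⟩ else 0 with hvbdef
  set sb : ℕ → ℝ := fun n => if h : n < M then s ⟨n, h⟩ else 0 with hsbdef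
  have hvb : ∀ i : Fin M, vb i.val = v i := by
    intro i; simp only [hvbdef, dif_pos i.isLt, Fin.eta]
  have hsb : ∀ i : Fin M, sb i.val = s i := by
    intro i; simp only [hsbdef, dif_pos i.isLt, Fin.eta]
  have hIio : ∀ i : Fin M, ∏ k ∈ Finset.Iio i, (1 - s k)
      = ∏ k ∈ Finset.range i.val, (1 - sb k) := by
    intro i
    calc ∏ k ∈ Finset.Iio i, (1 - s k) = ∏ k ∈ Finset.Iio i, (1 - sb k.val) :=
          Finset.prod_congr rfl fun k _ => by rw [hsb]
      _ = ∏ n ∈ (Finset.Iio i).map Fin.valEmbedding, (1 - sb n) := by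
          rw [Finset.prod_map]; rfl
      _ = ∏ n ∈ Finset.range i.val, (1 - sb n) := by
          rw [Fin.map_valEmbedding_Iio, Nat.Iio_eq_range]
  have h1 : ∑ i : Fin M, v i * (s i * ∏ k ∈ Finset.Iio i, (1 - s k))
      = ∑ n ∈ Finset.range M, vb n * (sb n * ∏ k ∈ Finset.range n, (1 - sb k)) := by
    rw [← Fin.sum_univ_eq_sum_range
      (fun n => vb n * (sb n * ∏ k ∈ Finset.range n, (1 - sb k))) M]
    exact Finset.sum_congr rfl fun i _ => by rw [hvb, hsb, hIio]
  have h2 : ∑ j, w j * r j = ∑ n ∈ Finset.range M, vb n * sb n := by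
    rw [← Fin.sum_univ_eq_sum_range (fun n => vb n * sb n) M,
      ← Equiv.sum_comp σ (fun j => w j * r j)]
    exact Finset.sum_congr rfl fun i _ => by rw [hvb, hsb]
  have h3 : ∑ n ∈ Finset.range M, sb n ≤ 1 := by
    rw [← Fin.sum_univ_eq_sum_range sb M]
    calc ∑ i : Fin M, sb i.val = ∑ i : Fin M, s i :=
          Finset.sum_congr rfl fun i _ => hsb i
      _ = ∑ j, r j := Equiv.sum_comp σ r
      _ ≤ 1 := hrsum
  have hcomb := comb (n := M) vb sb
    (fun n hn => by simp only [hvbdef, dif_pos hn]; exact hv0 _)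
    (fun n hn => by
      have hn' : n < M := by omega
      simp only [hvbdef, dif_pos hn, dif_pos hn']
      exact hvanti _ _ (by simp [Fin.mk_le_mk]))
    (fun n hn => by simp only [hsbdef, dif_pos hn]; exact hs0 _)
    (fun n hn => by simp only [hsbdef, dif_pos hn]; exact hs1 _)
    h3
  calc (1 - 1 / Real.exp 1) * ∑ j, w j * r j
      = (1 - 1 / Real.exp 1) * ∑ n ∈ Finset.range M, vb n * sb n := by rw [h2]
    _ ≤ ∑ n ∈ Finset.range M, vb n * (sb n * ∏ k ∈ Finset.range n, (1 - sb k)) := hcomb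
    _ = ∑ i : Fin M, v i * (s i * ∏ k ∈ Finset.Iio i, (1 - s k)) := h1.symm
    _ = ∑ Y : Finset (Fin M), L Y := hgroup.symm
    _ ≤ ∑ Y : Finset (Fin M), pp Y * g (Y.map σ.toEmbedding) := hLB
open MeasureTheory Finset

theorem stmt_14 {Ω : Type*} [MeasurableSpace Ω] (μ : Measure Ω) [IsProbabilityMeasure μ]
    (M : ℕ) (w r : Fin M → ℝ)
    (hw : ∀ j, 0 ≤ w j) (hr : ∀ j, 0 ≤ r j ∧ r j ≤ 1) (hrsum : ∑ j, r j ≤ 1)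
    (P : Ω → Finset (Fin M))
    (hdist : ∀ X : Finset (Fin M), μ {ω | P ω = X} =
      ENNReal.ofReal ((∏ j ∈ X, r j) * ∏ j ∈ Xᶜ, (1 - r j))) :
    ∫ ω, (⨆ j ∈ P ω, w j) ∂μ ≥ (1 - 1 / Real.exp 1) * ∑ j, w j * r j := by
  classical
  set g : Finset (Fin M) → ℝ := fun X => ⨆ j ∈ X, w j with hgdef
  set p : Finset (Fin M) → ℝ :=
    fun X => (∏ j ∈ X, r j) * ∏ j ∈ Xᶜ, (1 - r j) with hpdef
  have hp0 : ∀ X, 0 ≤ p X := by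
    intro X
    apply mul_nonneg <;> apply Finset.prod_nonneg <;> intro j hj
    · exact (hr j).1
    · linarith [(hr j).2]
  -- facts about g
  have hg0 : ∀ X, 0 ≤ g X := by
    intro X
    rcases isEmpty_or_nonempty (Fin M) with hM | hM
    · simp [hgdef, Real.iSup_of_isEmpty]
    · obtain ⟨j0⟩ := hM
      have hbdd : BddAbove (Set.range fun j => ⨆ _ : j ∈ X, w j) :=
        Set.Finite.bddAbove (Set.finite_range _)
      refine le_trans ?_ (le_ciSup hbdd j0)
      by_cases hj : j0 ∈ X
      · rw [ciSup_pos hj]; exact hw j0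
      · simp [hj, Real.iSup_of_isEmpty]
  have hgmem : ∀ X j, j ∈ X → w j ≤ g X := by
    intro X j hj
    have hbdd : BddAbove (Set.range fun j => ⨆ _ : j ∈ X, w j) :=
      Set.Finite.bddAbove (Set.finite_range _)
    refine le_trans ?_ (le_ciSup hbdd j)
    rw [ciSup_pos hj]
  -- sets
  set A : Finset (Fin M) → Set Ω := fun X => {ω | P ω = X} with hAdef
  have hA : ∀ X, μ (A X) = ENNReal.ofReal (p X) := hdist
  set B : Finset (Fin M) → Set Ω := fun X => toMeasurable μ (A X) with hBdef
  have hAB : ∀ X, A X ⊆ B X := fun X => subset_toMeasurable μ (A X)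
  have hBmeas : ∀ X, MeasurableSet (B X) := fun X => measurableSet_toMeasurable μ (A X)
  have hB : ∀ X, μ (B X) = ENNReal.ofReal (p X) := by
    intro X; rw [hBdef]; rw [measure_toMeasurable]; exact hA X
  have hpsum : ∑ X : Finset (Fin M), p X = 1 := by
    have h := Finset.prod_add r (fun j => 1 - r j) Finset.univ
    have h1 : ∏ j, (r j + (1 - r j)) = 1 := by
      apply Finset.prod_eq_one; intro j _; ring
    rw [h1] at h
    rw [Finset.powerset_univ] at h
    rw [h]
    exact Finset.sum_congr rfl fun X _ => by
      simp only [hpdef]; rw [Finset.compl_eq_univ_sdiff]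
  have hsumB : ∑ X : Finset (Fin M), μ (B X) = 1 := by
    calc ∑ X : Finset (Fin M), μ (B X) = ∑ X : Finset (Fin M), ENNReal.ofReal (p X) :=
          Finset.sum_congr rfl fun X _ => hB X
      _ = ENNReal.ofReal (∑ X : Finset (Fin M), p X) :=
          (ENNReal.ofReal_sum_of_nonneg fun X _ => hp0 X).symm
      _ = 1 := by rw [hpsum]; simp
  have hAuniv : (⋃ X : Finset (Fin M), A X) = Set.univ := by
    ext ω; simp only [Set.mem_iUnion, Set.mem_univ, iff_true]
    exact ⟨P ω, rfl⟩
  -- pairwise null intersections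
  have hnull : ∀ X Y : Finset (Fin M), X ≠ Y → μ (B X ∩ B Y) = 0 := by
    intro X Y hXY
    have hcover : (1:ENNReal) ≤ μ (B X ∪ B Y)
        + ∑ Z ∈ Finset.univ \ {X, Y}, μ (B Z) := by
      have hsub : Set.univ ⊆ (B X ∪ B Y) ∪ ⋃ Z ∈ Finset.univ \ ({X, Y} : Finset _), B Z := by
        rw [← hAuniv]
        intro ω hω
        obtain ⟨Z, hZ⟩ := Set.mem_iUnion.mp hω
        by_cases hZXY : Z = X ∨ Z = Y
        · rcases hZXY with rfl | rfl
          · exact Or.inl (Or.inl (hAB Z hZ))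
          · exact Or.inl (Or.inr (hAB Z hZ))
        · have hmem : Z ∈ Finset.univ \ ({X, Y} : Finset _) := by
            simp only [Finset.mem_sdiff, Finset.mem_univ, Finset.mem_insert,
              Finset.mem_singleton, true_and]
            exact hZXY
          exact Or.inr (Set.mem_biUnion hmem (hAB Z hZ))
      calc (1:ENNReal) = μ Set.univ := (measure_univ).symm
        _ ≤ μ ((B X ∪ B Y) ∪ ⋃ Z ∈ Finset.univ \ ({X, Y} : Finset _), B Z) :=
            measure_mono hsub
        _ ≤ μ (B X ∪ B Y) + μ (⋃ Z ∈ Finset.univ \ ({X, Y} : Finset _), B Z) :=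
            measure_union_le _ _
        _ ≤ μ (B X ∪ B Y) + ∑ Z ∈ Finset.univ \ {X, Y}, μ (B Z) := by
            gcongr
            exact measure_biUnion_finset_le _ _
    have hsplit : μ (B X) + μ (B Y) + ∑ Z ∈ Finset.univ \ {X, Y}, μ (B Z) = 1 := by
      rw [← hsumB]
      rw [← Finset.sum_sdiff (Finset.subset_univ ({X, Y} : Finset _))]
      rw [Finset.sum_pair hXY]
      ring
    have hui : μ (B X ∪ B Y) + μ (B X ∩ B Y) = μ (B X) + μ (B Y) :=
      measure_union_add_inter _ (hBmeas Y)
    have hfin : μ (B X ∪ B Y) ≠ ⊤ := measure_ne_top μ _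
    have hle : (1:ENNReal) + μ (B X ∩ B Y) ≤ 1 + 0 := by
      rw [add_zero]
      calc (1:ENNReal) + μ (B X ∩ B Y)
          ≤ (μ (B X ∪ B Y) + ∑ Z ∈ Finset.univ \ {X, Y}, μ (B Z)) + μ (B X ∩ B Y) := by
            gcongr
        _ = (μ (B X ∪ B Y) + μ (B X ∩ B Y)) + ∑ Z ∈ Finset.univ \ {X, Y}, μ (B Z) := by
            ring
        _ = (μ (B X) + μ (B Y)) + ∑ Z ∈ Finset.univ \ {X, Y}, μ (B Z) := by rw [hui]
        _ = 1 := by rw [← hsplit]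
    have := (ENNReal.add_le_add_iff_left (by simp : (1:ENNReal) ≠ ⊤)).mp hle
    exact le_antisymm this zero_le
  -- disjointified measurable sets
  set D : Finset (Fin M) → Set Ω :=
    fun X => (⋃ Y ∈ Finset.univ.erase X, B Y)ᶜ with hDdef
  have hDmeas : ∀ X, MeasurableSet (D X) := by
    intro X
    apply MeasurableSet.compl
    exact MeasurableSet.biUnion (Finset.univ.erase X).countable_toSet
      fun Y _ => hBmeas Y
  have hDA : ∀ X, D X ⊆ A X := by
    intro X ω hω
    simp only [hDdef, Set.mem_compl_iff, Set.mem_iUnion, not_exists] at hω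
    by_contra hPX
    have h1 : P ω ∈ Finset.univ.erase X := by
      simp only [Finset.mem_erase, Finset.mem_univ, and_true]
      exact fun h => hPX (by rw [hAdef]; exact h)
    exact hω (P ω) h1 (hAB (P ω) rfl)
  have hADnull : ∀ X, μ (A X \ D X) = 0 := by
    intro X
    have hsub : A X \ D X ⊆ ⋃ Y ∈ Finset.univ.erase X, (B X ∩ B Y) := by
      intro ω hω
      obtain ⟨hωA, hωD⟩ := hω
      simp only [hDdef, Set.mem_compl_iff, not_not] at hωD
      obtain ⟨Y, hY, hωB⟩ := Set.mem_iUnion₂.mp hωD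
      exact Set.mem_biUnion hY ⟨hAB X hωA, hωB⟩
    refine le_antisymm ?_ zero_le
    calc μ (A X \ D X) ≤ μ (⋃ Y ∈ Finset.univ.erase X, (B X ∩ B Y)) := measure_mono hsub
      _ ≤ ∑ Y ∈ Finset.univ.erase X, μ (B X ∩ B Y) := measure_biUnion_finset_le _ _
      _ = 0 := Finset.sum_eq_zero fun Y hY =>
          hnull X Y (Ne.symm (Finset.mem_erase.mp hY).1)
  have hDmeasure : ∀ X, μ (D X) = ENNReal.ofReal (p X) := by
    intro X
    refine le_antisymm ?_ ?_
    · rw [← hA X]; exact measure_mono (hDA X)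
    · rw [← hA X]
      calc μ (A X) ≤ μ (D X ∪ (A X \ D X)) := measure_mono fun ω hω => by
            by_cases hD : ω ∈ D X
            · exact Or.inl hD
            · exact Or.inr ⟨hω, hD⟩
        _ ≤ μ (D X) + μ (A X \ D X) := measure_union_le _ _
        _ = μ (D X) := by rw [hADnull X, add_zero]
  -- the null exceptional set
  set N : Set Ω := ⋃ X : Finset (Fin M), (A X \ D X) with hNdef
  have hN : μ N = 0 := measure_iUnion_null fun X => hADnull X
  -- a.e. identification with a simple function
  set h : Ω → ℝ := fun ω => ∑ X : Finset (Fin M), (D X).indicator (fun _ => g X) ω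
    with hhdef
  have hae : (fun ω => g (P ω)) =ᵐ[μ] h := by
    have hptwise : ∀ ω ∉ N, g (P ω) = h ω := by
      intro ω hω
      simp only [hNdef, Set.mem_iUnion, not_exists] at hω
      have hωD : ω ∈ D (P ω) := by
        by_contra hc
        exact hω (P ω) ⟨rfl, hc⟩
      simp only [hhdef]
      rw [Finset.sum_eq_single (P ω)]
      · rw [Set.indicator_of_mem hωD]
      · intro Y _ hY
        apply Set.indicator_of_notMem
        intro hωY
        exact hY (hDA Y hωY).symm
      · intro hY; exact absurd (Finset.mem_univ (P ω)) hY
    have hsub : {ω | ¬ (g (P ω) = h ω)} ⊆ N := by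
      intro ω hω
      by_contra hc
      exact hω (hptwise ω hc)
    exact measure_mono_null hsub hN
  have hint : ∫ ω, h ω ∂μ = ∑ X : Finset (Fin M), p X * g X := by
    rw [hhdef]
    rw [MeasureTheory.integral_finset_sum _
      (fun X _ => (integrable_const (g X)).indicator (hDmeas X))]
    apply Finset.sum_congr rfl
    intro X _
    rw [MeasureTheory.integral_indicator_const (g X) (hDmeas X)]
    rw [measureReal_def, hDmeasure X, smul_eq_mul, ENNReal.toReal_ofReal (hp0 X)]
  have hintf : ∫ ω, (⨆ j ∈ P ω, w j) ∂μ = ∑ X : Finset (Fin M), p X * g X := by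
    rw [← hint]
    exact integral_congr_ae hae
  rw [ge_iff_le, hintf]
  simp only [hpdef]
  exact part2 w r hw hr hrsum g hg0 hgmem
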